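/- If X is a topological space containing S^α as a subspace (α an infinite cardinal), then there exists a continuous retraction f : X → S^α, i.e., a continuous map restricting to the identity on S^α. -/

import Mathlib

open Filter Topology

universe u

/-- The two points of the Sierpiński space. -/
inductive SPt : Type
  | zero
  | one
deriving DecidableEq

/-- The Sierpiński topology: `{zero}` is open, `{one}` is not. -/
instance : TopologicalSpace SPt := TopologicalSpace.generateFrom {{SPt.zero}}

/-- `A` is closed under limits of `o`-indexed transfinite sequences for all infinite
ordinals `o ≤ β` (β an infinite cardinal, viewed as an ordinal). -/
def OrdSeqClosed {X : Type u} [TopologicalSpace X] (β : Cardinal.{u}) (A : Set X) : Prop :=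
  ∀ o : Ordinal.{u}, Ordinal.omega0 ≤ o → o ≤ β.ord →
    ∀ f : o.ToType → X, (∀ i, f i ∈ A) →
    ∀ x : X, Filter.Tendsto f Filter.atTop (nhds x) → x ∈ A

/-- A space is β-sequential if every such subset is closed. -/
def IsBetaSequential (X : Type u) [TopologicalSpace X] (β : Cardinal.{u}) : Prop :=
  ∀ A : Set X, OrdSeqClosed β A → IsClosed A

/-- `A` contains limits of all convergent transfinite sequences of its points. -/
def TransSeqClosed {X : Type u} [TopologicalSpace X] (A : Set X) : Prop :=
  ∀ o : Ordinal.{u}, Ordinal.omega0 ≤ o →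
    ∀ f : o.ToType → X, (∀ i, f i ∈ A) →
    ∀ x : X, Filter.Tendsto f Filter.atTop (nhds x) → x ∈ A

/-- Pseudoradial space. -/
def IsPseudoradial (X : Type u) [TopologicalSpace X] : Prop :=
  ∀ A : Set X, TransSeqClosed A → IsClosed A

/-- If `X` contains `S^α` as a subspace, then there is a continuous
retraction of `X` onto `S^α`. -/
theorem retraction_onto_sierpinski_power (α : Cardinal.{u}) (hα : Cardinal.aleph0 ≤ α)
    (X : Type u) [TopologicalSpace X] (e : (α.ord.ToType → SPt) → X)
    (he : Topology.IsEmbedding e) :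
    ∃ f : X → (α.ord.ToType → SPt), Continuous f ∧ ∀ s, f (e s) = s := by
  classical
  -- `{zero}` is open in `SPt`
  have hz : IsOpen ({SPt.zero} : Set SPt) :=
    TopologicalSpace.isOpen_generateFrom_of_mem rfl
  -- each coordinate set is open in the power
  have hU : ∀ i : α.ord.ToType,
      IsOpen {s : α.ord.ToType → SPt | s i = SPt.zero} := by
    intro i
    have : IsOpen ((fun s : α.ord.ToType → SPt => s i) ⁻¹' {SPt.zero}) :=
      (continuous_apply i).isOpen_preimage _ hz
    simpa [Set.preimage, Set.mem_singleton_iff] using this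
  -- pull back through the embedding to get open sets in `X`
  have hV : ∀ i : α.ord.ToType, ∃ V : Set X, IsOpen V ∧
      e ⁻¹' V = {s | s i = SPt.zero} := by
    intro i
    exact (he.isInducing.isOpen_iff).1 (hU i)
  choose V hVopen hVpre using hV
  refine ⟨fun x i => if x ∈ V i then SPt.zero else SPt.one, ?_, ?_⟩
  · apply continuous_pi
    intro i
    rw [continuous_generateFrom_iff]
    rintro s rfl
    have : (fun x : X => if x ∈ V i then SPt.zero else SPt.one) ⁻¹' {SPt.zero}
        = V i := by
      ext x
      by_cases hx : x ∈ V i <;> simp [hx]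
    rw [this]
    exact hVopen i
  · intro s
    funext i
    have : e s ∈ V i ↔ s i = SPt.zero := by
      rw [← Set.mem_preimage, hVpre i]; rfl
    by_cases hs : s i = SPt.zero
    · simp [this.2 hs, hs]
    · have : e s ∉ V i := fun h => hs (this.1 h)
      cases h : s i with
      | zero => exact absurd h hs
      | one => simp [this, h]
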